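/- arXiv:1507.05914 — 5 statements merged into one kernel-verified Lean document; each statement's English description precedes it below -/
import Mathlib

section
/- The origin x = 0 is a global minimizer of f(x) = h(√(xᵀQx)) − μᵀx over the simplex S = {x ≥ 0 : 1ᵀx ≤ 1} if and only if there exists v in the closed unit ball B of ℝⁿ such that h'(0)·Q^{1/2}v − μ ≥ 0 componentwise. -/
open Matrix


lemma deriv0_nonneg (h : ℝ → ℝ) (h'0 : ℝ)
    (hmono : MonotoneOn h (Set.Ici (0:ℝ)))
    (hd0 : HasDerivWithinAt h h'0 (Set.Ici (0:ℝ)) 0) : 0 ≤ h'0 := by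
  have hslope := hasDerivWithinAt_iff_tendsto_slope.mp hd0
  rw [Set.Ici_sdiff_left] at hslope
  refine ge_of_tendsto hslope ?_
  filter_upwards [self_mem_nhdsWithin] with t ht
  have ht' : (0:ℝ) < t := ht
  have : h 0 ≤ h t := hmono Set.self_mem_Ici (le_of_lt ht') (le_of_lt ht')
  rw [slope_def_field]
  exact div_nonneg (by linarith) (by linarith)

lemma tangent_line (h : ℝ → ℝ) (h'0 : ℝ)
    (hconv : ConvexOn ℝ (Set.Ici (0:ℝ)) h)
    (hd0 : HasDerivWithinAt h h'0 (Set.Ici (0:ℝ)) 0) :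
    ∀ a : ℝ, 0 ≤ a → h 0 + h'0 * a ≤ h a := by
  intro a ha
  rcases eq_or_lt_of_le ha with rfl | ha
  · simp
  have hslope := hasDerivWithinAt_iff_tendsto_slope.mp hd0
  rw [Set.Ici_sdiff_left] at hslope
  have hle : h'0 ≤ (h a - h 0) / a := by
    refine le_of_tendsto hslope ?_
    filter_upwards [self_mem_nhdsWithin, Ioo_mem_nhdsGT_of_mem ⟨le_refl 0, ha⟩] with t ht htoo
    have ht' : (0:ℝ) < t := ht
    have := hconv.secant_mono (a := 0) Set.self_mem_Ici
      (Set.mem_Ici.mpr (le_of_lt ht')) (Set.mem_Ici.mpr (le_of_lt ha))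
      (ne_of_gt ht') (ne_of_gt ha) (le_of_lt htoo.2)
    simpa [slope_def_field] using this
  have := (le_div_iff₀ ha).mp hle
  linarith

lemma limit_bound (h : ℝ → ℝ) (h'0 : ℝ) (b c : ℝ) (hb : 0 ≤ b)
    (hd0 : HasDerivWithinAt h h'0 (Set.Ici (0:ℝ)) 0)
    (hbound : ∀ t : ℝ, t ∈ Set.Ioc (0:ℝ) 1 → t * c ≤ h (t * b) - h 0) :
    c ≤ h'0 * b := by
  rcases eq_or_lt_of_le hb with rfl | hb
  · have := hbound 1 ⟨zero_lt_one, le_refl 1⟩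
    simpa using this
  have hslope := hasDerivWithinAt_iff_tendsto_slope.mp hd0
  rw [Set.Ici_sdiff_left] at hslope
  have hcomp : Filter.Tendsto (fun t : ℝ => t * b) (nhdsWithin 0 (Set.Ioi 0))
      (nhdsWithin 0 (Set.Ioi 0)) := by
    have hmul : Filter.Tendsto (fun t : ℝ => t * b) (nhds 0) (nhds 0) := by
      simpa using (continuous_mul_right b).tendsto (0:ℝ)
    refine tendsto_nhdsWithin_of_tendsto_nhds_of_eventually_within _
      (hmul.mono_left nhdsWithin_le_nhds) ?_
    filter_upwards [self_mem_nhdsWithin] with t ht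
    exact mul_pos ht hb
  have htend : Filter.Tendsto (fun t : ℝ => slope h 0 (t * b)) (nhdsWithin 0 (Set.Ioi 0))
      (nhds h'0) := hslope.comp hcomp
  have hge : c / b ≤ h'0 := by
    refine ge_of_tendsto htend ?_
    filter_upwards [self_mem_nhdsWithin, Ioo_mem_nhdsGT_of_mem ⟨le_refl 0, zero_lt_one⟩]
      with t ht htoo
    have ht' : (0:ℝ) < t := ht
    have hb1 := hbound t ⟨ht', le_of_lt htoo.2⟩
    rw [slope_def_field]
    have htb : (0:ℝ) < t * b := mul_pos ht' hb
    rw [sub_zero, div_le_div_iff₀ hb htb]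
    nlinarith [mul_le_mul_of_nonneg_right hb1 (le_of_lt hb)]
  exact (div_le_iff₀ hb).mp hge
open Matrix Pointwise

theorem aux_sep (n : ℕ) (Qhalf : Matrix (Fin n) (Fin n) ℝ) (μ : EuclideanSpace ℝ (Fin n)) (h'0 : ℝ)
    (hsym : Qhalf.IsSymm)
    (key : ∀ x : EuclideanSpace ℝ (Fin n), (∀ i, 0 ≤ x i) →
      μ ⬝ᵥ x ≤ h'0 * ‖(Matrix.toEuclideanLin Qhalf x)‖) :
    ∃ v : EuclideanSpace ℝ (Fin n), ‖v‖ ≤ 1 ∧ ∀ i, 0 ≤ h'0 * (Qhalf.mulVec v) i - μ i := by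
  classical
  by_contra hcon
  push_neg at hcon
  set L : EuclideanSpace ℝ (Fin n) →ₗ[ℝ] EuclideanSpace ℝ (Fin n) :=
    h'0 • Matrix.toEuclideanLin Qhalf with hL
  set s : Set (EuclideanSpace ℝ (Fin n)) := (fun y => L y - μ) '' Metric.closedBall 0 1 with hs
  set t : Set (EuclideanSpace ℝ (Fin n)) := {y | ∀ i, 0 ≤ y i} with ht
  have hLapp : ∀ (v : EuclideanSpace ℝ (Fin n)) (i : Fin n),
      L v i = h'0 * (Qhalf.mulVec v) i := fun v i => rfl
  have hsub : ∀ (a b : EuclideanSpace ℝ (Fin n)) (i : Fin n), (a - b) i = a i - b i :=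
    fun a b i => rfl
  have hdisj : Disjoint s t := by
    rw [Set.disjoint_left]
    rintro a ⟨v, hv, rfl⟩ hat
    obtain ⟨i, hi⟩ := hcon v (mem_closedBall_zero_iff.mp hv)
    have := hat i
    dsimp only at this
    rw [hsub, hLapp] at this
    linarith
  have hsconv : Convex ℝ s := by
    have : s = (L '' Metric.closedBall 0 1 - {μ} : Set (EuclideanSpace ℝ (Fin n))) := by
      rw [Set.sub_singleton, Set.image_image]
    rw [this]
    exact ((convex_closedBall _ _).linear_image L).sub (convex_singleton μ)
  have hscomp : IsCompact s := by
    apply (isCompact_closedBall (0 : EuclideanSpace ℝ (Fin n)) 1).image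
    exact (L.continuous_of_finiteDimensional).sub continuous_const
  have htconv : Convex ℝ t := by
    intro a ha b hb p q hp hq hpq i
    have : (p • a + q • b) i = p * a i + q * b i := rfl
    rw [this]
    exact add_nonneg (mul_nonneg hp (ha i)) (mul_nonneg hq (hb i))
  have htclosed : IsClosed t := by
    have : t = ⋂ i, (EuclideanSpace.proj (𝕜 := ℝ) i) ⁻¹' Set.Ici 0 := by
      ext y
      simp only [ht, Set.mem_setOf_eq, Set.mem_iInter, Set.mem_preimage, Set.mem_Ici]
      rfl
    rw [this]
    exact isClosed_iInter fun i => isClosed_Ici.preimage (EuclideanSpace.proj i).continuous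
  obtain ⟨g, u, w, hgs, huw, hgt⟩ :=
    geometric_hahn_banach_compact_closed hsconv hscomp htconv htclosed hdisj
  set x : EuclideanSpace ℝ (Fin n) := (InnerProductSpace.toDual ℝ _).symm g with hx
  have hgx : ∀ y : EuclideanSpace ℝ (Fin n), g y = ∑ i, x i * y i := by
    intro y
    rw [← InnerProductSpace.toDual_symm_apply (y := g) (x := y)]
    rw [PiLp.inner_apply]
    simp [RCLike.inner_apply, conj_trivial]
    exact Finset.sum_congr rfl fun i _ => mul_comm _ _
  have hw0 : w < 0 := by
    have h0t : (0 : EuclideanSpace ℝ (Fin n)) ∈ t := fun i => le_refl 0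
    have := hgt 0 h0t
    rw [hgx] at this
    simpa using this
  have hxnn : ∀ i, 0 ≤ x i := by
    intro i
    by_contra hxi
    push_neg at hxi
    have hxne : x i ≠ 0 := ne_of_lt hxi
    have hmem : (EuclideanSpace.single i ((w - 1) / x i)) ∈ t := by
      intro j
      rw [EuclideanSpace.single_apply]
      rcases eq_or_ne j i with rfl | hj
      · simp only [if_pos rfl]
        exact le_of_lt (div_pos_of_neg_of_neg (by linarith) hxi)
      · simp [hj]
    have := hgt _ hmem
    rw [hgx] at this
    have hsum : ∑ j, x j * (EuclideanSpace.single i ((w - 1) / x i)) j = w - 1 := by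
      rw [Finset.sum_eq_single i]
      · rw [EuclideanSpace.single_apply, if_pos rfl]
        field_simp
      · intro j _ hj
        rw [EuclideanSpace.single_apply, if_neg hj, mul_zero]
      · simp
    rw [hsum] at this
    linarith
  -- Now get contradiction using key applied to x
  have hkey := key x hxnn
  set q : EuclideanSpace ℝ (Fin n) := Matrix.toEuclideanLin Qhalf x with hq
  have hqm : ∀ i, q i = Qhalf.mulVec x i := fun i => rfl
  have hdot : ∀ v : EuclideanSpace ℝ (Fin n), ∑ i, x i * (Qhalf.mulVec v) i = ∑ i, q i * v i := by
    intro v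
    have h1 : ∑ i, x i * (Qhalf.mulVec v) i = x ⬝ᵥ Qhalf.mulVec v := rfl
    have h2 : ∑ i, q i * v i = Qhalf.mulVec x ⬝ᵥ v := rfl
    rw [h1, h2, Matrix.dotProduct_mulVec, ← Matrix.mulVec_transpose, hsym.eq]
  by_cases hq0 : q = 0
  · have hmem : L 0 - μ ∈ s := ⟨0, by simp, rfl⟩
    have := hgs _ hmem
    rw [hgx] at this
    have hL0 : L (0 : EuclideanSpace ℝ (Fin n)) = 0 := map_zero L
    have hsum : ∑ i, x i * (L 0 - μ) i = -(μ ⬝ᵥ x) := by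
      rw [hL0]
      simp [hsub, dotProduct, mul_comm]
    rw [hsum] at this
    have hnq : ‖q‖ = 0 := by rw [hq0]; simp
    rw [hnq, mul_zero] at hkey
    linarith
  · set v : EuclideanSpace ℝ (Fin n) := ‖q‖⁻¹ • q with hv
    have hqpos : (0:ℝ) < ‖q‖ := norm_pos_iff.mpr hq0
    have hvnorm : ‖v‖ = 1 := by
      rw [hv, norm_smul, norm_inv, norm_norm, inv_mul_cancel₀ (ne_of_gt hqpos)]
    have hmem : L v - μ ∈ s := ⟨v, by simp [hvnorm], rfl⟩
    have := hgs _ hmem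
    rw [hgx] at this
    have hsum : ∑ i, x i * (L v - μ) i = h'0 * ‖q‖ - μ ⬝ᵥ x := by
      have e1 : ∀ i, x i * (L v - μ) i
          = h'0 * (x i * (Qhalf.mulVec v) i) - μ i * x i := by
        intro i; rw [hsub, hLapp]; ring
      rw [Finset.sum_congr rfl (fun i _ => e1 i), Finset.sum_sub_distrib, ← Finset.mul_sum,
        hdot]
      have e2 : ∑ i, q i * v i = ‖q‖ := by
        have : ∀ i, q i * v i = ‖q‖⁻¹ * (q i * q i) := by
          intro i
          have : v i = ‖q‖⁻¹ * q i := rfl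
          rw [this]; ring
        rw [Finset.sum_congr rfl (fun i _ => this i), ← Finset.mul_sum]
        have hnormsq : ∑ i, q i * q i = ‖q‖ ^ 2 := by
          rw [EuclideanSpace.norm_eq, Real.sq_sqrt (by positivity)]
          simp [sq]
        rw [hnormsq, sq]
        field_simp
      rw [e2]
      rfl
    rw [hsum] at this
    linarith

/-- `0` is a global minimizer of `f` over the simplex `S` iff
there is `v` in the closed unit ball with `h'(0)·Q^{1/2}v − μ ≥ 0` componentwise. -/
theorem stmt_2 (n : ℕ) (Q Qhalf : Matrix (Fin n) (Fin n) ℝ) (μ : EuclideanSpace ℝ (Fin n))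
    (h : ℝ → ℝ) (h'0 : ℝ)
    (hQpd : Q.PosDef) (hQhsym : Qhalf.IsSymm) (hQh : Qhalf * Qhalf = Q)
    (hconv : ConvexOn ℝ (Set.Ici (0:ℝ)) h)
    (hmono : MonotoneOn h (Set.Ici (0:ℝ)))
    (hdiff : ∀ t : ℝ, 0 < t → DifferentiableAt ℝ h t)
    (hd0 : HasDerivWithinAt h h'0 (Set.Ici (0:ℝ)) 0)
    (S : Set (EuclideanSpace ℝ (Fin n)))
    (hS : S = {x | (∑ i, x i) ≤ 1 ∧ ∀ i, 0 ≤ x i})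
    (f : EuclideanSpace ℝ (Fin n) → ℝ)
    (hf : ∀ x, f x = h (Real.sqrt (x ⬝ᵥ Q.mulVec x)) - μ ⬝ᵥ x)
    (hfconv : ConvexOn ℝ S f) :
    (∀ x ∈ S, f 0 ≤ f x) ↔
    ∃ v : EuclideanSpace ℝ (Fin n), ‖v‖ ≤ 1 ∧
      ∀ i, 0 ≤ h'0 * (Qhalf.mulVec v) i - μ i := by
  classical
  have hsqrt : ∀ x : EuclideanSpace ℝ (Fin n),
      Real.sqrt (x ⬝ᵥ Q.mulVec x) = ‖Matrix.toEuclideanLin Qhalf x‖ := by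
    intro x
    have hdq : x ⬝ᵥ Q.mulVec x = Qhalf.mulVec x ⬝ᵥ Qhalf.mulVec x := by
      rw [← hQh, ← Matrix.mulVec_mulVec, Matrix.dotProduct_mulVec, ← Matrix.mulVec_transpose,
        hQhsym.eq]
    rw [hdq, EuclideanSpace.norm_eq]
    congr 1
    have e : ∀ i, ‖(Matrix.toEuclideanLin Qhalf x) i‖ ^ 2
        = Qhalf.mulVec x i * Qhalf.mulVec x i := by
      intro i
      have : (Matrix.toEuclideanLin Qhalf x) i = Qhalf.mulVec x i := rfl
      rw [this, Real.norm_eq_abs, sq_abs, sq]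
    rw [Finset.sum_congr rfl (fun i _ => e i)]
    rfl
  have f0 : f 0 = h 0 := by
    rw [hf]
    have h1 : ((0 : EuclideanSpace ℝ (Fin n)) ⬝ᵥ Q.mulVec (0 : EuclideanSpace ℝ (Fin n)))
        = (0:ℝ) := zero_dotProduct _
    have h2 : (μ ⬝ᵥ (0 : EuclideanSpace ℝ (Fin n))) = (0:ℝ) := dotProduct_zero _
    rw [h1, h2, Real.sqrt_zero, sub_zero]
  constructor
  · intro hmin
    have key : ∀ x : EuclideanSpace ℝ (Fin n), (∀ i, 0 ≤ x i) →
        μ ⬝ᵥ x ≤ h'0 * ‖Matrix.toEuclideanLin Qhalf x‖ := by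
      intro x hx
      set c : ℝ := (∑ i, x i) + 1 with hc
      have hsumnn : 0 ≤ ∑ i, x i := Finset.sum_nonneg fun i _ => hx i
      have hcpos : 0 < c := by simp only [hc]; linarith
      set z : EuclideanSpace ℝ (Fin n) := c⁻¹ • x with hz
      have hzi : ∀ i, z i = c⁻¹ * x i := fun i => rfl
      have hzsum : ∑ i, z i = c⁻¹ * ∑ i, x i := by
        rw [Finset.mul_sum]; exact Finset.sum_congr rfl fun i _ => hzi i
      have hzsum1 : ∑ i, z i ≤ 1 := by
        rw [hzsum]
        have hle : (∑ i, x i) ≤ c := by simp only [hc]; linarith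
        calc c⁻¹ * ∑ i, x i ≤ c⁻¹ * c :=
              mul_le_mul_of_nonneg_left hle (inv_nonneg.mpr hcpos.le)
          _ = 1 := inv_mul_cancel₀ (ne_of_gt hcpos)
      have hznn : ∀ i, 0 ≤ z i := fun i => by
        rw [hzi]; exact mul_nonneg (inv_nonneg.mpr hcpos.le) (hx i)
      have hbz : μ ⬝ᵥ z ≤ h'0 * ‖Matrix.toEuclideanLin Qhalf z‖ := by
        apply limit_bound h h'0 _ _ (norm_nonneg _) hd0
        intro t ht
        have htzi : ∀ i, (t • z) i = t * z i := fun i => rfl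
        have htzS : t • z ∈ S := by
          rw [hS]
          constructor
          · have : ∑ i, (t • z) i = t * ∑ i, z i := by
              rw [Finset.mul_sum]; exact Finset.sum_congr rfl fun i _ => htzi i
            rw [this]
            have hzsnn : 0 ≤ ∑ i, z i := Finset.sum_nonneg fun i _ => hznn i
            nlinarith [ht.1, ht.2]
          · intro i; rw [htzi]; exact mul_nonneg ht.1.le (hznn i)
        have hmin' := hmin _ htzS
        rw [f0, hf] at hmin'
        have hsm : Real.sqrt (WithLp.ofLp (t • z) ⬝ᵥ Q.mulVec (WithLp.ofLp (t • z)))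
            = t * ‖Matrix.toEuclideanLin Qhalf z‖ := by
          rw [hsqrt, _root_.map_smul, norm_smul, Real.norm_eq_abs, abs_of_pos ht.1]
        rw [hsm] at hmin'
        have hdp : μ ⬝ᵥ WithLp.ofLp (t • z) = t * (μ ⬝ᵥ z) := dotProduct_smul t μ z
        rw [hdp] at hmin'
        linarith
      have hxcz : x = c • z := by
        rw [hz, smul_smul, mul_inv_cancel₀ (ne_of_gt hcpos), one_smul]
      have hYx : ‖Matrix.toEuclideanLin Qhalf x‖ = c * ‖Matrix.toEuclideanLin Qhalf z‖ := by
        rw [hxcz, _root_.map_smul, norm_smul, Real.norm_eq_abs, abs_of_pos hcpos]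
      have hdpx : μ ⬝ᵥ x = c * (μ ⬝ᵥ z) := by
        conv_lhs => rw [hxcz]
        exact dotProduct_smul c μ z
      rw [hdpx, hYx]
      calc c * (μ ⬝ᵥ z) ≤ c * (h'0 * ‖Matrix.toEuclideanLin Qhalf z‖) :=
            mul_le_mul_of_nonneg_left hbz hcpos.le
        _ = h'0 * (c * ‖Matrix.toEuclideanLin Qhalf z‖) := by ring
    exact aux_sep n Qhalf μ h'0 hQhsym key
  · rintro ⟨v, hv1, hv2⟩ x hxS
    rw [hS] at hxS
    obtain ⟨hsum, hxnn⟩ := hxS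
    rw [f0, hf, hsqrt]
    have h'0nn := deriv0_nonneg h h'0 hmono hd0
    set b := ‖Matrix.toEuclideanLin Qhalf x‖ with hb
    have hstep1 : μ ⬝ᵥ x ≤ h'0 * b := by
      have hcomp : μ ⬝ᵥ x ≤ ∑ i, (h'0 * (Qhalf.mulVec v) i) * x i := by
        have : μ ⬝ᵥ x = ∑ i, μ i * x i := rfl
        rw [this]
        exact Finset.sum_le_sum fun i _ =>
          mul_le_mul_of_nonneg_right (by linarith [hv2 i]) (hxnn i)
      have e1 : ∑ i, (h'0 * (Qhalf.mulVec v) i) * x i = h'0 * (v ⬝ᵥ Qhalf.mulVec x) := by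
        have : v ⬝ᵥ Qhalf.mulVec x = Qhalf.mulVec v ⬝ᵥ x := by
          rw [Matrix.dotProduct_mulVec, ← Matrix.mulVec_transpose, hQhsym.eq]
        rw [this]
        rw [show Qhalf.mulVec v ⬝ᵥ x = ∑ i, (Qhalf.mulVec v) i * x i from rfl, Finset.mul_sum]
        exact Finset.sum_congr rfl fun i _ => by ring
      have e2 : v ⬝ᵥ Qhalf.mulVec x ≤ ‖v‖ * b := by
        have einner : v ⬝ᵥ Qhalf.mulVec x
            = inner (𝕜 := ℝ) v (Matrix.toEuclideanLin Qhalf x) := by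
          rw [PiLp.inner_apply]
          simp only [RCLike.inner_apply, conj_trivial]
          exact Finset.sum_congr rfl fun i _ => mul_comm _ _
        rw [einner, hb]
        exact real_inner_le_norm _ _
      have hbnn : (0:ℝ) ≤ b := norm_nonneg _
      calc μ ⬝ᵥ x ≤ h'0 * (v ⬝ᵥ Qhalf.mulVec x) := by rw [← e1]; exact hcomp
        _ ≤ h'0 * (‖v‖ * b) := mul_le_mul_of_nonneg_left e2 h'0nn
        _ ≤ h'0 * (1 * b) := by
            apply mul_le_mul_of_nonneg_left _ h'0nn
            exact mul_le_mul_of_nonneg_right hv1 hbnn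
        _ = h'0 * b := by ring
    have hstep2 := tangent_line h h'0 hconv hd0 b (norm_nonneg _)
    linarith
end

section
/- Along the sequence generated by the non-monotone Frank-Wolfe algorithm, every iterate remains in the sublevel set L(x⁰) ∩ S, and the reference values f̄^k = max_{0≤i≤min(p,k)} f(x^{k−i}) form a non-increasing sequence converging to some limit f̄. -/
/-- iterates of the non-monotone Frank-Wolfe algorithm stay in
`L(x⁰) ∩ S`, and the reference values `f̄^k` are non-increasing and converge. -/
theorem stmt_10 (n : ℕ) (S : Set (EuclideanSpace ℝ (Fin n))) (hScomp : IsCompact S)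
    (f : EuclideanSpace ℝ (Fin n) → ℝ) (hfcont : ContinuousOn f S)
    (p : ℕ) (x : ℕ → EuclideanSpace ℝ (Fin n)) (hxS : ∀ k, x k ∈ S)
    (α : ℕ → ℝ) (d : ℕ → EuclideanSpace ℝ (Fin n)) (g : ℕ → ℝ)
    (γ₁ γ₂ : ℝ) (hγ₁ : γ₁ ∈ Set.Ioo (0:ℝ) (1/2)) (hγ₂ : 0 ≤ γ₂)
    (fbar : ℕ → ℝ)
    (hfbar : ∀ k, fbar k = (Finset.range (min p k + 1)).sup'
        Finset.nonempty_range_add_one (fun i => f (x (k - i))))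
    (hαpos : ∀ k, 0 < α k) (hg : ∀ k, g k < 0)
    (harmijo : ∀ k, f (x (k+1)) ≤ fbar k + γ₁ * α k * g k - γ₂ * (α k)^2 * ‖d k‖^2)
    (hbdd : ∃ m : ℝ, ∀ y ∈ {y | f y ≤ f (x 0)} ∩ S, m ≤ f y) :
    (∀ k, x k ∈ {y | f y ≤ f (x 0)} ∩ S) ∧
    (∀ k, fbar (k+1) ≤ fbar k) ∧
    (∃ fb : ℝ, Filter.Tendsto fbar Filter.atTop (nhds fb)) := by
  obtain ⟨hγ₁0, _⟩ := hγ₁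
  -- f (x (k+1)) ≤ fbar k
  have hstep : ∀ k, f (x (k+1)) ≤ fbar k := by
    intro k
    have h1 : γ₁ * α k * g k ≤ 0 := by
      have hα := hαpos k
      exact le_of_lt (mul_neg_of_pos_of_neg (by positivity) (hg k))
    have h2 : 0 ≤ γ₂ * (α k)^2 * ‖d k‖^2 := by positivity
    have := harmijo k; linarith
  -- fbar is nonincreasing
  have hmono : ∀ k, fbar (k+1) ≤ fbar k := by
    intro k
    rw [hfbar (k+1)]
    apply Finset.sup'_le
    intro i hi
    simp only [Finset.mem_range] at hi
    match i with
    | 0 => simpa using hstep k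
    | (j+1) =>
      have hj : j ∈ Finset.range (min p k + 1) := by
        simp only [Finset.mem_range]
        have h1 : j + 1 ≤ min p (k+1) := Nat.lt_succ_iff.mp hi
        have hp : j + 1 ≤ p := le_trans h1 (min_le_left _ _)
        have hk : j + 1 ≤ k + 1 := le_trans h1 (min_le_right _ _)
        have : j ≤ min p k := le_min (by omega) (by omega)
        omega
      have : k + 1 - (j+1) = k - j := by omega
      rw [this, hfbar k]
      exact Finset.le_sup' (fun i => f (x (k - i))) hj
  have hanti : Antitone fbar := antitone_nat_of_succ_le hmono
  have hfle : ∀ k, f (x k) ≤ fbar k := by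
    intro k
    rw [hfbar k]
    have h0 : (0:ℕ) ∈ Finset.range (min p k + 1) := by simp
    exact Finset.le_sup' (fun i => f (x (k - i))) h0
  have hfbar0 : fbar 0 = f (x 0) := by
    rw [hfbar 0]; simp
  have hin : ∀ k, x k ∈ {y | f y ≤ f (x 0)} ∩ S := by
    intro k
    refine ⟨?_, hxS k⟩
    have := hfle k
    have := hanti (Nat.zero_le k)
    simp only [Set.mem_setOf_eq]
    linarith [hfbar0 ▸ hanti (Nat.zero_le k)]
  refine ⟨hin, hmono, ?_⟩
  obtain ⟨m, hm⟩ := hbdd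
  have hbelow : ∀ k, m ≤ fbar k := fun k => le_trans (hm _ (hin k)) (hfle k)
  exact ⟨⨅ k, fbar k, tendsto_atTop_ciInf hanti ⟨m, fun y ⟨k, hk⟩ => hk ▸ hbelow k⟩⟩
end

section
/- If the non-monotone Frank-Wolfe algorithm produces an infinite sequence {x^k}, then the objective values f(x^k) converge to the same limit f̄ as the reference values f̄^k, i.e., lim f(x^k) = lim f̄^k = f̄. -/
open Filter

/-- Telescoping bound for norms of differences along a sequence. -/
lemma telescope_norm {E : Type*} [SeminormedAddCommGroup E] (y : ℕ → E) :
    ∀ d a : ℕ, ‖y (a + d) - y a‖ ≤ ∑ i ∈ Finset.range d, ‖y (a + i + 1) - y (a + i)‖ := by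
  intro d
  induction d with
  | zero => intro a; simp
  | succ d ih =>
    intro a
    rw [Finset.sum_range_succ]
    calc ‖y (a + (d+1)) - y a‖
        ≤ ‖y (a + d + 1) - y (a + d)‖ + ‖y (a + d) - y a‖ := by
          have : y (a + (d+1)) - y a = (y (a + d + 1) - y (a + d)) + (y (a + d) - y a) := by
            rw [show a + (d+1) = a + d + 1 from rfl]; abel
          rw [this]; exact norm_add_le _ _
      _ ≤ ‖y (a + d + 1) - y (a + d)‖ + ∑ i ∈ Finset.range d, ‖y (a + i + 1) - y (a + i)‖ := by
          linarith [ih a]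
      _ = _ := by ring

/-- the objective values `f(x^k)` converge to the same limit `f̄`
as the reference values `f̄^k`. -/
theorem stmt_11 (n : ℕ) (S : Set (EuclideanSpace ℝ (Fin n))) (hScomp : IsCompact S)
    (f : EuclideanSpace ℝ (Fin n) → ℝ)
    (p : ℕ) (x : ℕ → EuclideanSpace ℝ (Fin n)) (hxS : ∀ k, x k ∈ S)
    (K : Set (EuclideanSpace ℝ (Fin n))) (hK : K = {y | f y ≤ f (x 0)} ∩ S)
    (hKcomp : IsCompact K) (hxK : ∀ k, x k ∈ K)
    (hfuc : UniformContinuousOn f K)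
    (α : ℕ → ℝ) (d : ℕ → EuclideanSpace ℝ (Fin n)) (g : ℕ → ℝ)
    (γ₁ γ₂ : ℝ) (hγ₁ : γ₁ ∈ Set.Ioo (0:ℝ) (1/2)) (hγ₂ : 0 < γ₂)
    (fbar : ℕ → ℝ)
    (hfbar : ∀ k, fbar k = (Finset.range (min p k + 1)).sup'
        Finset.nonempty_range_add_one (fun i => f (x (k - i))))
    (hαpos : ∀ k, 0 < α k) (hg : ∀ k, g k < 0)
    (hupd : ∀ k, x (k+1) = x k + α k • d k)
    (harmijo : ∀ k, f (x (k+1)) ≤ fbar k + γ₁ * α k * g k - γ₂ * (α k)^2 * ‖d k‖^2)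
    (fb : ℝ) (hfb : Filter.Tendsto fbar Filter.atTop (nhds fb)) :
    Filter.Tendsto (fun k => f (x k)) Filter.atTop (nhds fb) := by
  -- trivial case p = 0 : fbar k = f (x k)
  rcases Nat.eq_zero_or_pos p with hp0 | hp
  · have : ∀ k, f (x k) = fbar k := by
      intro k; rw [hfbar k]; subst hp0; simp
    exact hfb.congr (fun k => (this k).symm)
  -- basic facts
  have hA : ∀ k, f (x k) ≤ fbar k := by
    intro k
    rw [hfbar k]
    have h0 : (0:ℕ) ∈ Finset.range (min p k + 1) := by simp
    have := Finset.le_sup' (f := fun i => f (x (k - i))) h0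
    simp only [Nat.sub_zero] at this
    exact this
  have hArm : ∀ k, f (x (k+1)) ≤ fbar k - γ₂ * (α k)^2 * ‖d k‖^2 := by
    intro k
    have h1 := harmijo k
    have h2 : γ₁ * α k * g k < 0 :=
      mul_neg_of_pos_of_neg (mul_pos hγ₁.1 (hαpos k)) (hg k)
    linarith
  have hterm : ∀ k, 0 ≤ γ₂ * (α k)^2 * ‖d k‖^2 := by
    intro k; positivity
  have hMono : ∀ k, fbar (k+1) ≤ fbar k := by
    intro k
    rw [hfbar (k+1)]
    apply Finset.sup'_le
    intro i hi
    rw [Finset.mem_range, Nat.lt_succ_iff] at hi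
    match i with
    | 0 =>
      simpa using le_trans (hArm k) (by linarith [hterm k])
    | (i'+1) =>
      have hi' : i' ≤ min p k := by omega
      have : k + 1 - (i'+1) = k - i' := by omega
      rw [this, hfbar k]
      have hmem : i' ∈ Finset.range (min p k + 1) := by
        rw [Finset.mem_range]; omega
      exact Finset.le_sup' (f := fun i => f (x (k - i))) hmem
  have hAnti : Antitone fbar := antitone_nat_of_succ_le hMono
  have hGe : ∀ k, fb ≤ fbar k := hAnti.le_of_tendsto hfb
  -- choose the argmax index
  have hex : ∀ k, ∃ i, i ≤ min p k ∧ fbar k = f (x (k - i)) := by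
    intro k
    obtain ⟨i, hi, hieq⟩ := Finset.exists_mem_eq_sup'
      (Finset.nonempty_range_add_one (n := min p k)) (fun i => f (x (k - i)))
    rw [Finset.mem_range, Nat.lt_succ_iff] at hi
    exact ⟨i, hi, by rw [hfbar k]; exact hieq⟩
  choose jf hjle hjeq using hex
  set ℓ : ℕ → ℕ := fun k => k - jf k with hℓdef
  have hℓ_le : ∀ k, ℓ k ≤ k := fun k => Nat.sub_le _ _
  have hℓ_lb : ∀ k, k ≤ ℓ k + p := by
    intro k
    have := hjle k
    simp only [hℓdef]
    omega
  have hℓ_eq : ∀ k, f (x (ℓ k)) = fbar k := fun k => (hjeq k).symm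
  -- norm of steps
  have hstep : ∀ i, ‖x (i+1) - x i‖ = α i * ‖d i‖ := by
    intro i
    rw [hupd i]
    rw [add_sub_cancel_left, norm_smul, Real.norm_eq_abs, abs_of_pos (hαpos i)]
  -- uniform continuity in metric form
  have hUC := Metric.uniformContinuousOn_iff.mp hfuc
  -- the key induction step
  have step : ∀ jj : ℕ,
      Tendsto (fun k => f (x (ℓ k - jj))) atTop (nhds fb) →
      Tendsto (fun k => ‖x (ℓ k - jj) - x (ℓ k - jj - 1)‖) atTop (nhds 0) ∧
      Tendsto (fun k => f (x (ℓ k - (jj+1)))) atTop (nhds fb) := by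
    intro jj hPf
    set m : ℕ → ℕ := fun k => ℓ k - jj - 1 with hmdef
    have hm_big : ∀ k, k ≥ p + jj + 1 → m k + 1 = ℓ k - jj ∧ ℓ k - (jj + 1) = m k := by
      intro k hk
      have := hℓ_lb k
      simp only [hmdef]
      omega
    have hm_tendsto : Tendsto m atTop atTop := by
      apply tendsto_atTop_atTop.2
      intro b
      refine ⟨b + p + jj + 1, fun k hk => ?_⟩
      have := hℓ_lb k
      simp only [hmdef]
      omega
    have h1 : Tendsto (fun k => fbar (m k)) atTop (nhds fb) := hfb.comp hm_tendsto
    have h2 : Tendsto (fun k => f (x (m k + 1))) atTop (nhds fb) := by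
      apply hPf.congr'
      filter_upwards [eventually_ge_atTop (p + jj + 1)] with k hk
      rw [(hm_big k hk).1]
    have h3 : Tendsto (fun k => fbar (m k) - f (x (m k + 1))) atTop (nhds 0) := by
      simpa using h1.sub h2
    have h4 : Tendsto (fun k => γ₂ * (α (m k))^2 * ‖d (m k)‖^2) atTop (nhds 0) := by
      apply squeeze_zero (fun k => hterm (m k)) (fun k => ?_) h3
      linarith [hArm (m k)]
    have h5 : Tendsto (fun k => ‖x (m k + 1) - x (m k)‖^2) atTop (nhds 0) := by
      have := h4.const_mul γ₂⁻¹
      simp only [mul_zero] at this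
      apply this.congr
      intro k
      rw [hstep (m k), mul_pow]
      field_simp
    have h6 : Tendsto (fun k => ‖x (m k + 1) - x (m k)‖) atTop (nhds 0) := by
      have := h5.sqrt
      rw [Real.sqrt_zero] at this
      apply this.congr
      intro k
      exact Real.sqrt_sq (norm_nonneg _)
    constructor
    · apply h6.congr'
      filter_upwards [eventually_ge_atTop (p + jj + 1)] with k hk
      rw [(hm_big k hk).1]
    · -- f (x (m k)) → fb  via uniform continuity
      rw [Metric.tendsto_atTop]
      intro ε hε
      obtain ⟨δ, hδpos, hδ⟩ := hUC (ε/2) (by linarith)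
      obtain ⟨N1, hN1⟩ := (Metric.tendsto_atTop.mp h6) δ hδpos
      obtain ⟨N2, hN2⟩ := (Metric.tendsto_atTop.mp h2) (ε/2) (by linarith)
      refine ⟨max (max N1 N2) (p + jj + 1), fun k hk => ?_⟩
      have hk1 : k ≥ N1 := le_trans (le_max_left N1 N2) (le_trans (le_max_left _ _) hk)
      have hk2 : k ≥ N2 := le_trans (le_max_right N1 N2) (le_trans (le_max_left _ _) hk)
      have hk3 : k ≥ p + jj + 1 := le_trans (le_max_right _ _) hk
      rw [(hm_big k hk3).2]
      have hdist : dist (x (m k)) (x (m k + 1)) < δ := by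
        rw [dist_eq_norm, norm_sub_rev]
        simpa [Real.dist_eq, abs_of_nonneg (norm_nonneg _)] using hN1 k hk1
      have := hδ _ (hxK (m k)) _ (hxK (m k + 1)) hdist
      calc dist (f (x (m k))) fb
          ≤ dist (f (x (m k))) (f (x (m k + 1))) + dist (f (x (m k + 1))) fb :=
            dist_triangle _ _ _
        _ < ε/2 + ε/2 := add_lt_add this (hN2 k hk2)
        _ = ε := by ring
  -- the convergence along the argmax shifted indices
  have P : ∀ jj : ℕ, Tendsto (fun k => f (x (ℓ k - jj))) atTop (nhds fb) := by
    intro jj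
    induction jj with
    | zero =>
      simpa using hfb.congr (fun k => (hℓ_eq k).symm)
    | succ jj ih => exact (step jj ih).2
  have Q : ∀ jj : ℕ, Tendsto (fun k => ‖x (ℓ k - jj) - x (ℓ k - jj - 1)‖) atTop (nhds 0) :=
    fun jj => (step jj (P jj)).1
  -- final assembly
  rw [Metric.tendsto_atTop]
  intro ε hε
  obtain ⟨δ, hδpos, hδ⟩ := hUC (ε/2) (by linarith)
  -- upper bound: fbar k < fb + ε eventually
  obtain ⟨N0, hN0⟩ := (Metric.tendsto_atTop.mp hfb) ε hε
  -- per-term bounds for t < p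
  have hq : ∀ t, ∃ Nt, ∀ k ≥ Nt, ‖x (ℓ (k + p) - t) - x (ℓ (k + p) - t - 1)‖ < δ / (2 * p) := by
    intro t
    obtain ⟨Nt, hNt⟩ := (Metric.tendsto_atTop.mp (Q t)) (δ / (2 * p))
      (by positivity)
    refine ⟨Nt, fun k hk => ?_⟩
    have := hNt (k + p) (by omega)
    simpa [Real.dist_eq, abs_of_nonneg (norm_nonneg _)] using this
  choose Nf hNf using hq
  set N : ℕ := max N0 ((Finset.range p).sup Nf) with hN
  refine ⟨N, fun k hk => ?_⟩
  have hkN0 : k ≥ N0 := le_trans (le_max_left _ _) hk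
  set L : ℕ := ℓ (k + p) with hL
  have hLk : k ≤ L := by have := hℓ_lb (k + p); simp only [hL]; omega
  have hLk2 : L ≤ k + p := hℓ_le (k + p)
  -- bound ‖x L - x k‖
  have hnorm : ‖x L - x k‖ < δ := by
    have htel : ‖x (k + (L - k)) - x k‖ ≤
        ∑ i ∈ Finset.range (L - k), ‖x (k + i + 1) - x (k + i)‖ := telescope_norm x (L - k) k
    rw [show k + (L - k) = L by omega] at htel
    have hbound : ∑ i ∈ Finset.range (L - k), ‖x (k + i + 1) - x (k + i)‖ ≤
        (L - k) • (δ / (2 * p)) := by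
      apply Finset.sum_le_card_nsmul _ _ _ ?_ |>.trans_eq (by rw [Finset.card_range])
      intro i hi
      rw [Finset.mem_range] at hi
      set t : ℕ := L - (k + i + 1) with ht
      have htp : t < p := by omega
      have h1 : k + i + 1 = L - t := by omega
      have h2 : k + i = L - t - 1 := by omega
      rw [h1, h2]
      have hkNt : k ≥ Nf t :=
        le_trans (le_trans (Finset.le_sup (Finset.mem_range.mpr htp)) (le_max_right N0 _)) hk
      exact le_of_lt (hNf t k hkNt)
    have hsm : ((L - k) : ℕ) • (δ / (2 * p)) ≤ δ / 2 := by
      rw [nsmul_eq_mul]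
      have h1 : ((L - k : ℕ) : ℝ) ≤ (p : ℝ) := by
        exact_mod_cast (by omega : L - k ≤ p)
      have h2 : (0:ℝ) < (p:ℝ) := by exact_mod_cast hp
      have h3 : ((L - k : ℕ) : ℝ) * (δ / (2 * p)) ≤ (p : ℝ) * (δ / (2 * p)) :=
        mul_le_mul_of_nonneg_right h1 (by positivity)
      have h4 : (p : ℝ) * (δ / (2 * p)) = δ / 2 := by field_simp
      linarith
    linarith
  have hUCres := hδ _ (hxK L) _ (hxK k) (by rwa [dist_eq_norm])
  have hfL : f (x L) = fbar (k + p) := hℓ_eq (k + p)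
  have hfbL : fb ≤ f (x L) := by rw [hfL]; exact hGe (k + p)
  -- combine
  rw [Real.dist_eq, abs_lt]
  constructor
  · -- fb - ε < f (x k)
    rw [Real.dist_eq, abs_lt] at hUCres
    linarith [hUCres.1, hUCres.2]
  · -- f (x k) - fb < ε
    have h1 := hA k
    have h2 := hN0 k hkN0
    rw [Real.dist_eq, abs_lt] at h2
    linarith [h2.2]
end

section
/- Under the assumptions of the non-monotone Frank-Wolfe convergence analysis, the directional derivatives along the chosen directions vanish asymptotically: lim_{k→∞} ∇f(x^k)ᵀd^k = 0. -/
open Filter Topology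


/-- the directional derivatives along the chosen Frank-Wolfe
directions vanish asymptotically: `∇f(x^k)ᵀd^k → 0`. -/
theorem stmt_12 (n : ℕ) (S : Set (EuclideanSpace ℝ (Fin n))) (hScomp : IsCompact S)
    (f : EuclideanSpace ℝ (Fin n) → ℝ) (hfC1 : ContDiff ℝ 1 f)
    (p : ℕ) (x : ℕ → EuclideanSpace ℝ (Fin n)) (hxS : ∀ k, x k ∈ S)
    (K : Set (EuclideanSpace ℝ (Fin n))) (hK : K = {y | f y ≤ f (x 0)} ∩ S)
    (hKcomp : IsCompact K) (hxK : ∀ k, x k ∈ K)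
    (d : ℕ → EuclideanSpace ℝ (Fin n)) (hdbdd : ∃ D : ℝ, ∀ k, ‖d k‖ ≤ D)
    (g : ℕ → ℝ) (hgdef : ∀ k, g k = fderiv ℝ f (x k) (d k)) (hg : ∀ k, g k < 0)
    (γ₁ γ₂ δ β : ℝ) (hγ₁ : γ₁ ∈ Set.Ioo (0:ℝ) (1/2)) (hγ₂ : 0 ≤ γ₂)
    (hδ : δ ∈ Set.Ioo (0:ℝ) 1) (hβ : 0 < β)
    (α αmax : ℕ → ℝ) (hαmax : ∀ k, β ≤ αmax k)
    (hα : ∀ k, 0 < α k ∧ α k ≤ αmax k)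
    (hupd : ∀ k, x (k+1) = x k + α k • d k)
    (fbar : ℕ → ℝ)
    (hfbar : ∀ k, fbar k = (Finset.range (min p k + 1)).sup'
        Finset.nonempty_range_add_one (fun i => f (x (k - i))))
    (harmijo : ∀ k, f (x (k+1)) ≤ fbar k + γ₁ * α k * g k - γ₂ * (α k)^2 * ‖d k‖^2)
    (hfail : ∀ k, α k < αmax k →
      fbar k + γ₁ * (α k / δ) * g k - γ₂ * (α k / δ)^2 * ‖d k‖^2
        < f (x k + (α k / δ) • d k))
    (fb : ℝ) (hfb : Filter.Tendsto fbar Filter.atTop (nhds fb))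
    (hfx : Filter.Tendsto (fun k => f (x k)) Filter.atTop (nhds fb)) :
    Filter.Tendsto g Filter.atTop (nhds 0) := by
  obtain ⟨hγ₁0, hγ₁half⟩ := hγ₁
  obtain ⟨hδ0, hδ1⟩ := hδ
  obtain ⟨D, hD⟩ := hdbdd
  have hDiff : Differentiable ℝ f := hfC1.differentiable one_ne_zero
  have hfderivCont : Continuous (fun y => fderiv ℝ f y) := hfC1.continuous_fderiv one_ne_zero
  -- fbar dominates f ∘ x
  have hfbarge : ∀ k, f (x k) ≤ fbar k := by
    intro k
    rw [hfbar k]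
    have h0 : (0:ℕ) ∈ Finset.range (min p k + 1) := Finset.mem_range.mpr (Nat.succ_pos _)
    exact Finset.le_sup' (fun i => f (x (k - i))) h0
  -- the gap tends to 0
  have hh : Tendsto (fun k => fbar k - f (x (k+1))) atTop (𝓝 0) := by
    have := hfb.sub (hfx.comp (tendsto_add_atTop_nat 1))
    simpa using this
  -- key inequality from Armijo
  have hkey : ∀ k, γ₁ * α k * (-(g k)) ≤ fbar k - f (x (k+1)) := by
    intro k
    have h1 := harmijo k
    nlinarith [mul_nonneg (mul_nonneg hγ₂ (sq_nonneg (α k))) (sq_nonneg ‖d k‖)]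
  -- by contradiction
  by_contra hcon
  rw [Metric.tendsto_atTop] at hcon
  push_neg at hcon
  obtain ⟨ε, hε, hfreq⟩ := hcon
  have hfreq' : ∃ᶠ k in atTop, g k ≤ -ε := by
    rw [frequently_atTop]
    intro N
    obtain ⟨k, hkN, hk⟩ := hfreq N
    refine ⟨k, hkN, ?_⟩
    have : |g k| ≥ ε := by simpa [Real.dist_eq] using hk
    have := abs_of_neg (hg k) ▸ this
    linarith
  obtain ⟨φ, hφmono, hφ⟩ := Filter.extraction_of_frequently_atTop hfreq'
  -- α (φ j) → 0
  have hαφ : Tendsto (fun j => α (φ j)) atTop (𝓝 0) := by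
    have hb : Tendsto (fun j => (fbar (φ j) - f (x (φ j + 1))) / (γ₁ * ε)) atTop (𝓝 0) := by
      have hsub : Tendsto (fun j => fbar (φ j) - f (x (φ j + 1))) atTop (𝓝 0) :=
        hh.comp hφmono.tendsto_atTop
      simpa using hsub.div_const (γ₁ * ε)
    refine squeeze_zero (fun j => (hα _).1.le) (fun j => ?_) hb
    have hk := hkey (φ j)
    have hge : ε ≤ -(g (φ j)) := by linarith [hφ j]
    rw [le_div_iff₀ (by positivity)]
    nlinarith [(hα (φ j)).1, hγ₁0,
      mul_le_mul_of_nonneg_left hge (mul_nonneg hγ₁0.le (hα (φ j)).1.le)]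
  -- eventually α (φ j) < β
  obtain ⟨J, hJ⟩ := (hαφ.eventually (gt_mem_nhds hβ)).exists_forall_of_atTop
  set φ₂ : ℕ → ℕ := fun j => φ (j + J) with hφ₂def
  have hφ₂mono : StrictMono φ₂ := fun a b hab => hφmono (by omega)
  have hφ₂g : ∀ j, g (φ₂ j) ≤ -ε := fun j => hφ (j + J)
  have hφ₂α : ∀ j, α (φ₂ j) < αmax (φ₂ j) := fun j =>
    lt_of_lt_of_le (hJ (j + J) (by omega)) (hαmax _)
  set t : ℕ → ℝ := fun j => α (φ₂ j) / δ with htdef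
  have ht0 : ∀ j, 0 < t j := fun j => div_pos (hα _).1 hδ0
  -- derivative of the section along the line
  have hline : ∀ (k : ℕ) (s : ℝ),
      HasDerivAt (fun s : ℝ => f (x k + s • d k)) (fderiv ℝ f (x k + s • d k) (d k)) s := by
    intro k s
    have hL : HasDerivAt (fun s : ℝ => x k + s • d k) (d k) s := by
      simpa using ((hasDerivAt_id s).smul_const (d k)).const_add (x k)
    exact (hDiff _).hasFDerivAt.comp_hasDerivAt s hL
  -- MVT for each j
  have hmvt : ∀ j, ∃ c ∈ Set.Ioo 0 (t j),
      fderiv ℝ f (x (φ₂ j) + c • d (φ₂ j)) (d (φ₂ j)) =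
        (f (x (φ₂ j) + t j • d (φ₂ j)) - f (x (φ₂ j))) / t j := by
    intro j
    have := exists_hasDerivAt_eq_slope (fun s : ℝ => f (x (φ₂ j) + s • d (φ₂ j)))
      (fun s : ℝ => fderiv ℝ f (x (φ₂ j) + s • d (φ₂ j)) (d (φ₂ j))) (ht0 j)
      ((hDiff.continuous.comp
        (continuous_const.add (continuous_id.smul continuous_const))).continuousOn) (fun s _ => hline (φ₂ j) s)
    obtain ⟨c, hc, hceq⟩ := this
    refine ⟨c, hc, ?_⟩
    simpa using hceq
  choose c hcmem hceq using hmvt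
  -- the MVT-derivative inequality
  have hineq : ∀ j, γ₁ * g (φ₂ j) - γ₂ * t j * ‖d (φ₂ j)‖^2 ≤
      fderiv ℝ f (x (φ₂ j) + c j • d (φ₂ j)) (d (φ₂ j)) := by
    intro j
    have hf1 := hfail (φ₂ j) (hφ₂α j)
    have hfb1 := hfbarge (φ₂ j)
    have ht := ht0 j
    have hf1' : fbar (φ₂ j) + γ₁ * t j * g (φ₂ j) - γ₂ * (t j)^2 * ‖d (φ₂ j)‖^2
        < f (x (φ₂ j) + t j • d (φ₂ j)) := hf1
    rw [hceq j, le_div_iff₀ ht]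
    nlinarith [hf1', hfb1, ht]
  -- compactness extractions
  obtain ⟨xs, hxsK, ψ, hψmono, hψconv⟩ := hKcomp.tendsto_subseq (fun j => hxK (φ₂ j))
  have hdball : ∀ j, d (φ₂ (ψ j)) ∈ Metric.closedBall (0:EuclideanSpace ℝ (Fin n)) D :=
    fun j => by simpa [Metric.mem_closedBall, dist_zero_right] using hD _
  obtain ⟨ds, hdsball, ρ, hρmono, hρconv⟩ :=
    (isCompact_closedBall (0:EuclideanSpace ℝ (Fin n)) D).tendsto_subseq hdball
  set σ : ℕ → ℕ := fun j => ψ (ρ j) with hσdef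
  have hxconv : Tendsto (fun j => x (φ₂ (σ j))) atTop (𝓝 xs) :=
    hψconv.comp hρmono.tendsto_atTop
  have hdconv : Tendsto (fun j => d (φ₂ (σ j))) atTop (𝓝 ds) := hρconv
  have htconv : Tendsto (fun j => t (σ j)) atTop (𝓝 0) := by
    have h1 : Tendsto (fun j => α (φ₂ j)) atTop (𝓝 0) :=
      hαφ.comp (tendsto_add_atTop_nat J)
    have h2 : Tendsto (fun j => t j) atTop (𝓝 0) := by
      simpa using h1.div_const δ
    exact h2.comp (hψmono.comp hρmono).tendsto_atTop
  have hcconv : Tendsto (fun j => c (σ j)) atTop (𝓝 0) :=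
    squeeze_zero (fun j => (hcmem (σ j)).1.le) (fun j => (hcmem (σ j)).2.le) htconv
  have hξconv : Tendsto (fun j => x (φ₂ (σ j)) + c (σ j) • d (φ₂ (σ j))) atTop (𝓝 xs) := by
    have := hxconv.add (hcconv.smul hdconv)
    simpa using this
  -- evaluation map continuity
  have happ : Continuous (fun q : (EuclideanSpace ℝ (Fin n)) × (EuclideanSpace ℝ (Fin n)) =>
      fderiv ℝ f q.1 q.2) :=
    isBoundedBilinearMap_apply.continuous.comp
      ((hfderivCont.comp continuous_fst).prodMk continuous_snd)
  set L : ℝ := fderiv ℝ f xs ds with hLdef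
  have hgconv : Tendsto (fun j => g (φ₂ (σ j))) atTop (𝓝 L) := by
    have h1 : Tendsto (fun j => (x (φ₂ (σ j)), d (φ₂ (σ j)))) atTop (𝓝 (xs, ds)) :=
      hxconv.prodMk_nhds hdconv
    have := (happ.tendsto (xs, ds)).comp h1
    simpa [hgdef, Function.comp_def] using this
  have haconv : Tendsto (fun j => fderiv ℝ f (x (φ₂ (σ j)) + c (σ j) • d (φ₂ (σ j)))
      (d (φ₂ (σ j)))) atTop (𝓝 L) := by
    have h1 : Tendsto (fun j => (x (φ₂ (σ j)) + c (σ j) • d (φ₂ (σ j)), d (φ₂ (σ j))))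
        atTop (𝓝 (xs, ds)) := hξconv.prodMk_nhds hdconv
    have := (happ.tendsto (xs, ds)).comp h1
    simpa [Function.comp_def] using this
  -- L ≤ -ε
  have hLneg : L ≤ -ε := le_of_tendsto hgconv (Eventually.of_forall fun j => hφ₂g (σ j))
  -- γ₁ L ≤ L
  have hbconv : Tendsto (fun j => γ₁ * g (φ₂ (σ j)) - γ₂ * t (σ j) * ‖d (φ₂ (σ j))‖^2)
      atTop (𝓝 (γ₁ * L)) := by
    have hnorm : Tendsto (fun j => ‖d (φ₂ (σ j))‖^2) atTop (𝓝 (‖ds‖^2)) :=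
      (hdconv.norm).pow 2
    have := ((hgconv.const_mul γ₁).sub (((htconv.const_mul γ₂)).mul hnorm))
    simpa using this
  have hγL : γ₁ * L ≤ L :=
    le_of_tendsto_of_tendsto' hbconv haconv (fun j => hineq (σ j))
  nlinarith
end

section
/- Let {x^k} ⊂ S be a sequence with directions d^k satisfying ∇f(x^k)ᵀd^k ≤ ∇f(x^k)ᵀ(x − x^k) for all x ∈ S, and suppose ∇f(x^k)ᵀd^k → 0. Then every limit point x* of {x^k} satisfies the first-order optimality condition ∇f(x*)ᵀ(x − x*) ≥ 0 for all x ∈ S; if f is convex on S, x* is a global minimizer of f over S. -/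
/-- if the Frank-Wolfe gaps vanish, every limit point `x*` of the
iterates satisfies the first-order optimality condition over `S`; if `f` is
convex on `S`, then `x*` is a global minimizer of `f` over `S`. -/
theorem stmt_13 (n : ℕ) (S : Set (EuclideanSpace ℝ (Fin n)))
    (hScomp : IsCompact S) (hSconv : Convex ℝ S)
    (f : EuclideanSpace ℝ (Fin n) → ℝ) (hfC1 : ContDiff ℝ 1 f)
    (x : ℕ → EuclideanSpace ℝ (Fin n)) (hxS : ∀ k, x k ∈ S)
    (d : ℕ → EuclideanSpace ℝ (Fin n)) (hdbdd : ∃ D : ℝ, ∀ k, ‖d k‖ ≤ D)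
    (hFW : ∀ k, ∀ y ∈ S, fderiv ℝ f (x k) (d k) ≤ fderiv ℝ f (x k) (y - x k))
    (hgap : Filter.Tendsto (fun k => fderiv ℝ f (x k) (d k)) Filter.atTop (nhds 0)) :
    ∀ xstar : EuclideanSpace ℝ (Fin n), MapClusterPt xstar Filter.atTop x →
      (∀ y ∈ S, 0 ≤ fderiv ℝ f xstar (y - xstar)) ∧
      (ConvexOn ℝ S f → ∀ y ∈ S, f xstar ≤ f y) := by
  intro xstar hcl
  obtain ⟨ψ, hψmono, hψtend⟩ := TopologicalSpace.FirstCountableTopology.tendsto_subseq hcl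
  have hdiff : Differentiable ℝ f := hfC1.differentiable one_ne_zero
  have hderivC : Continuous fun p : EuclideanSpace ℝ (Fin n) => fderiv ℝ f p :=
    hfC1.continuous_fderiv one_ne_zero
  have hxstarS : xstar ∈ S :=
    hScomp.isClosed.mem_of_tendsto hψtend (Filter.Eventually.of_forall fun k => hxS (ψ k))
  have hfo : ∀ y ∈ S, 0 ≤ fderiv ℝ f xstar (y - xstar) := by
    intro y hy
    -- limit of gaps along subsequence is 0
    have hgap' : Filter.Tendsto (fun k => fderiv ℝ f (x (ψ k)) (d (ψ k)))
        Filter.atTop (nhds 0) := hgap.comp hψmono.tendsto_atTop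
    -- RHS tends to fderiv f xstar (y - xstar)
    have hA : Filter.Tendsto (fun k => fderiv ℝ f (x (ψ k))) Filter.atTop
        (nhds (fderiv ℝ f xstar)) := (hderivC.tendsto xstar).comp hψtend
    have hv : Filter.Tendsto (fun k => y - x (ψ k)) Filter.atTop
        (nhds (y - xstar)) := tendsto_const_nhds.sub hψtend
    have happly : Continuous fun p :
        (EuclideanSpace ℝ (Fin n) →L[ℝ] ℝ) × EuclideanSpace ℝ (Fin n) => p.1 p.2 :=
      isBoundedBilinearMap_apply.continuous
    have hrhs : Filter.Tendsto (fun k => fderiv ℝ f (x (ψ k)) (y - x (ψ k)))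
        Filter.atTop (nhds (fderiv ℝ f xstar (y - xstar))) :=
      (happly.tendsto _).comp (hA.prodMk_nhds hv)
    exact le_of_tendsto_of_tendsto hgap' hrhs
      (Filter.Eventually.of_forall fun k => hFW (ψ k) y hy)
  refine ⟨hfo, fun hconv y hy => ?_⟩
  -- directional derivative underestimate via convexity
  by_contra hlt
  push_neg at hlt
  set v := y - xstar with hv
  have hderiv : HasDerivAt (fun t : ℝ => f (xstar + t • v)) (fderiv ℝ f xstar v) 0 := by
    have h1 : HasFDerivAt f (fderiv ℝ f xstar) (xstar + (0:ℝ) • v) := by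
      simpa using (hdiff (xstar + (0:ℝ) • v)).hasFDerivAt
    have h2 : HasDerivAt (fun t : ℝ => xstar + t • v) v 0 := by
      simpa using ((hasDerivAt_id (0:ℝ)).smul_const v).const_add xstar
    exact h1.comp_hasDerivAt 0 h2
  have hslope : Filter.Tendsto (fun t : ℝ => (f (xstar + t • v) - f xstar) / t)
      (nhdsWithin 0 (Set.Ioi 0)) (nhds (fderiv ℝ f xstar v)) := by
    have := hasDerivAt_iff_tendsto_slope.mp hderiv
    have h := this.mono_left (nhdsWithin_mono 0 (by
      intro t ht
      exact ne_of_gt ht : Set.Ioi (0:ℝ) ⊆ {0}ᶜ))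
    refine h.congr' ?_
    filter_upwards [self_mem_nhdsWithin] with t ht
    simp [slope_def_field, div_eq_inv_mul]
  -- each slope is ≤ f y - f xstar on (0,1]
  have hub : ∀ᶠ t in nhdsWithin (0:ℝ) (Set.Ioi 0),
      (f (xstar + t • v) - f xstar) / t ≤ f y - f xstar := by
    filter_upwards [Ioo_mem_nhdsGT_of_mem (by norm_num : (0:ℝ) ∈ Set.Ico 0 1),
      self_mem_nhdsWithin] with t ht ht'
    have ht0 : 0 < t := ht.1
    have ht1 : t ≤ 1 := le_of_lt ht.2
    have hcx : f (xstar + t • v) ≤ (1 - t) * f xstar + t * f y := by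
      have := hconv.2 hxstarS hy (by linarith : (0:ℝ) ≤ 1 - t) (le_of_lt ht0)
        (by ring : (1 - t) + t = 1)
      have heq : (1 - t) • xstar + t • y = xstar + t • v := by
        simp [hv, smul_sub, sub_smul]
        module
      simpa [heq, smul_eq_mul] using this
    rw [div_le_iff₀ ht0]
    nlinarith
  have hle : fderiv ℝ f xstar v ≤ f y - f xstar :=
    le_of_tendsto hslope hub
  have := hfo y hy
  rw [← hv] at this
  linarith
end
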